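/- If G = (V, E) is a graph with minimum degree δ(G) ≥ 10^10 + 10^8, then there exists a subset S ⊆ E of edges such that every vertex v ∈ V is incident with at least one edge of S and at most d(v) − 10^10 edges of S. -/

import Mathlib

open Classical in
/-- Degree of `v` in `G` (classical, so usable for arbitrary subgraphs). -/
noncomputable def deg {V : Type*} [Fintype V] (G : SimpleGraph V) (v : V) : ℕ :=
  G.degree v

open Classical in
/-- Weighted degree (sum) of `v` under edge weighting `w`. -/
noncomputable def wdeg {V : Type*} [Fintype V] (G : SimpleGraph V) (w : Sym2 V → ℕ) (v : V) : ℕ :=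
  ∑ e ∈ G.incidenceFinset v, w e

/-- `G` has no `K₂`-component: every edge is adjacent to some other edge. -/
def NoIsolatedEdge {V : Type*} (G : SimpleGraph V) : Prop :=
  ∀ u v, G.Adj u v → ∃ x, (G.Adj u x ∧ x ≠ v) ∨ (G.Adj v x ∧ x ≠ u)

/-- `G` admits a neighbour-sum-distinguishing edge weighting with weights in {1,2,3}. -/
def Fulfills123 {V : Type*} [Fintype V] (G : SimpleGraph V) : Prop :=
  ∃ w : Sym2 V → ℕ, (∀ e ∈ G.edgeSet, w e = 1 ∨ w e = 2 ∨ w e = 3) ∧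
    ∀ u v, G.Adj u v → wdeg G w u ≠ wdeg G w v

set_option maxHeartbeats 1000000 in
set_option maxRecDepth 10000 in
/-- If `δ(G) ≥ 10^10 + 10^8` then there is an edge subset `S` with
`1 ≤ d_S(v) ≤ d(v) - 10^10` for every vertex `v`. -/
theorem stmt_15 {V : Type*} [Fintype V] (G : SimpleGraph V)
    (hδ : ∀ v : V, 10 ^ 10 + 10 ^ 8 ≤ deg G v) :
    ∃ S ⊆ G.edgeSet, ∀ v : V,
      1 ≤ {e ∈ S | v ∈ e}.ncard ∧ {e ∈ S | v ∈ e}.ncard ≤ deg G v - 10 ^ 10 := by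
  classical
  have hdeg : ∀ v, deg G v = (G.neighborFinset v).card := by
    intro v
    unfold deg SimpleGraph.degree SimpleGraph.neighborFinset
    congr!
  set c : V → ℕ := fun v => deg G v - (10 ^ 10 + 1) with hc
  have hc200 : ∀ v, deg G v ≤ 200 * c v := by
    intro v; have := hδ v; simp only [hc]; omega
  set t : V → Finset (V × ℕ) := fun u =>
    (G.neighborFinset u).biUnion (fun v => {v} ×ˢ Finset.range (c v)) with ht
  have hall : ∀ A : Finset V, A.card ≤ (A.biUnion t).card := by
    intro A
    have hB : A.biUnion t =
        (A.biUnion fun u => G.neighborFinset u).biUnion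
          (fun v => {v} ×ˢ Finset.range (c v)) := by
      ext p
      simp only [ht, Finset.mem_biUnion]
      constructor
      · rintro ⟨u, hu, v, hv, h⟩
        exact ⟨v, ⟨u, hu, hv⟩, h⟩
      · rintro ⟨v, ⟨u, hu, hv⟩, h⟩
        exact ⟨u, hu, v, hv, h⟩
    set B := A.biUnion fun u => G.neighborFinset u with hBdef
    have hcard : (A.biUnion t).card = ∑ v ∈ B, c v := by
      rw [hB, Finset.card_biUnion]
      · exact Finset.sum_congr rfl fun v _ => by simp
      · intro x _ y _ hxy
        simp only [Finset.disjoint_left, Finset.mem_product, Finset.mem_singleton]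
        rintro ⟨a, b⟩ ⟨rfl, _⟩ ⟨rfl, _⟩
        exact hxy rfl
    have hNB : ∀ u ∈ A, G.neighborFinset u ⊆ B := by
      intro u hu x hx
      exact Finset.mem_biUnion.mpr ⟨u, hu, hx⟩
    have hdc : ∑ u ∈ A, deg G u ≤ ∑ v ∈ B, deg G v := by
      have h1 : ∑ u ∈ A, deg G u
          = ∑ u ∈ A, ∑ v ∈ B, (if v ∈ G.neighborFinset u then 1 else 0) := by
        refine Finset.sum_congr rfl fun u hu => ?_
        rw [hdeg, ← Finset.card_filter, Finset.filter_mem_eq_inter,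
          Finset.inter_eq_right.mpr (hNB u hu)]
      rw [h1, Finset.sum_comm]
      refine Finset.sum_le_sum fun v _ => ?_
      have h2 : ∑ u ∈ A, (if v ∈ G.neighborFinset u then 1 else 0)
          = (A.filter (· ∈ G.neighborFinset v)).card := by
        rw [Finset.card_filter]
        refine Finset.sum_congr rfl fun u _ => ?_
        simp [SimpleGraph.mem_neighborFinset, SimpleGraph.adj_comm]
      rw [h2, hdeg]
      apply Finset.card_le_card
      intro u hu
      exact (Finset.mem_filter.mp hu).2
    have hA200 : 200 * A.card ≤ ∑ u ∈ A, deg G u := by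
      calc 200 * A.card = ∑ _u ∈ A, 200 := by rw [Finset.sum_const, smul_eq_mul, mul_comm]
        _ ≤ ∑ u ∈ A, deg G u := Finset.sum_le_sum fun u _ => by have := hδ u; omega
    have hB200 : ∑ v ∈ B, deg G v ≤ 200 * ∑ v ∈ B, c v := by
      rw [Finset.mul_sum]
      exact Finset.sum_le_sum fun v _ => hc200 v
    rw [hcard]
    have : 200 * A.card ≤ 200 * ∑ v ∈ B, c v := le_trans hA200 (le_trans hdc hB200)
    omega
  obtain ⟨f, hfinj, hft⟩ := (Finset.all_card_le_biUnion_card_iff_existsInjective' t).mp hall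
  have hmem : ∀ u, (f u).1 ∈ G.neighborFinset u ∧ (f u).2 < c ((f u).1) := by
    intro u
    have := hft u
    simp only [ht, Finset.mem_biUnion, Finset.mem_product, Finset.mem_singleton,
      Finset.mem_range] at this
    obtain ⟨v, hv, h1, h2⟩ := this
    exact ⟨h1 ▸ hv, h1 ▸ h2⟩
  set g : V → V := fun u => (f u).1 with hg
  have hadj : ∀ u, G.Adj u (g u) := fun u =>
    (SimpleGraph.mem_neighborFinset _ _ _).mp (hmem u).1
  have hload : ∀ v, (Finset.univ.filter (fun u => g u = v)).card ≤ c v := by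
    intro v
    have : (Finset.univ.filter (fun u => g u = v)).card ≤ (Finset.range (c v)).card := by
      apply Finset.card_le_card_of_injOn (fun u => (f u).2)
      · intro u hu
        simp only [Finset.mem_coe, Finset.mem_filter] at hu
        exact Finset.mem_range.mpr (hu.2 ▸ (hmem u).2)
      · intro u hu u' hu' h
        simp only [Finset.coe_filter, Set.mem_setOf_eq] at hu hu'
        apply hfinj
        exact Prod.ext (hu.2.trans hu'.2.symm) h
    simpa using this
  refine ⟨{e | ∃ u, e = s(u, g u)}, ?_, ?_⟩
  · rintro e ⟨u, rfl⟩
    exact (hadj u)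
  · intro v
    have hfin : {e ∈ {e : Sym2 V | ∃ u, e = s(u, g u)} | v ∈ e}.Finite := Set.toFinite _
    constructor
    · have hne : {e ∈ {e : Sym2 V | ∃ u, e = s(u, g u)} | v ∈ e}.Nonempty :=
        ⟨s(v, g v), ⟨v, rfl⟩, by simp⟩
      exact (Set.ncard_pos hfin).mpr hne
    · have hsub : {e ∈ {e : Sym2 V | ∃ u, e = s(u, g u)} | v ∈ e}
          ⊆ (fun u => s(u, g u)) '' ({v} ∪ {u | g u = v}) := by
        rintro e ⟨⟨u, rfl⟩, hv⟩
        rcases Sym2.mem_iff.mp hv with h | h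
        · exact ⟨u, Or.inl h.symm, rfl⟩
        · exact ⟨u, Or.inr h.symm, rfl⟩
      have h1 : {e ∈ {e : Sym2 V | ∃ u, e = s(u, g u)} | v ∈ e}.ncard
          ≤ (({v} : Set V) ∪ {u | g u = v}).ncard :=
        le_trans (Set.ncard_le_ncard hsub (Set.toFinite _)) (Set.ncard_image_le (Set.toFinite _))
      have h2 : (({v} : Set V) ∪ {u | g u = v}).ncard ≤ 1 + c v := by
        refine le_trans (Set.ncard_union_le _ _) ?_
        have : ({u | g u = v} : Set V).ncard ≤ c v := by
          have he : ({u | g u = v} : Set V) = ↑(Finset.univ.filter (fun u => g u = v)) := by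
            ext u; simp
          rw [he, Set.ncard_coe_finset]
          exact hload v
        rw [Set.ncard_singleton]
        omega
      have := hδ v
      simp only [hc] at h2
      omega
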